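/- Let Φ be a Horn formula, ρ ⊆ V_Φ a set of variables assigned true, and let S ⊇ ρ be the set of variables set to true by unit propagation from Φ⁺|_ρ together with ρ. If no negative clause c ∈ Φ⁻ has all of its variables contained in S, then the complete interpretation that assigns true to every variable in S and false to every variable in V_Φ \ S is a model of Φ; in particular Φ|_ρ is satisfiable. -/

import Mathlib

abbrev Lit (V : Type) := V × Bool
abbrev Clause (V : Type) := Finset (Lit V)
abbrev CnfForm (V : Type) := Finset (Clause V)

variable {V : Type} [DecidableEq V]

/-- Restriction Φ|_ρ : remove clauses containing a literal of ρ, and delete from the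
remaining clauses every literal whose complement is in ρ. -/
def restrict (Φ : CnfForm V) (ρ : Finset (Lit V)) : CnfForm V :=
  (Φ.filter fun c => ∀ l ∈ ρ, l ∉ c).image fun c => c.filter fun l => (l.1, !l.2) ∉ ρ

/-- Unit propagation derives the literal `l` from `Φ` : repeatedly assigning the
literals of unit clauses true and simplifying eventually produces the unit clause
`{l}` or the empty clause. -/
inductive UPDerives : CnfForm V → Lit V → Prop
  | unit {Φ : CnfForm V} {l : Lit V} : ({l} : Clause V) ∈ Φ → UPDerives Φ l
  | bot {Φ : CnfForm V} {l : Lit V} : (∅ : Clause V) ∈ Φ → UPDerives Φ l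
  | step {Φ : CnfForm V} {l : Lit V} (m : Lit V) : ({m} : Clause V) ∈ Φ →
      UPDerives (restrict Φ {m}) l → UPDerives Φ l

/-- Unit propagation derives the empty clause from `Φ`, i.e. `Φ* = ⊥`. -/
inductive UPEmpty : CnfForm V → Prop
  | bot {Φ : CnfForm V} : (∅ : Clause V) ∈ Φ → UPEmpty Φ
  | step {Φ : CnfForm V} (m : Lit V) : ({m} : Clause V) ∈ Φ → UPEmpty (restrict Φ {m}) → UPEmpty Φ

/-- `UPReach Φ Ψ` : the formula `Ψ` is obtained from `Φ` by a sequence of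
unit-propagation steps. -/
inductive UPReach : CnfForm V → CnfForm V → Prop
  | refl (Φ : CnfForm V) : UPReach Φ Φ
  | step {Φ Ψ : CnfForm V} (m : Lit V) : UPReach Φ Ψ → ({m} : Clause V) ∈ Ψ →
      UPReach Φ (restrict Ψ {m})

/-- The set of variables occurring in `Φ`. -/
def varsOf (Φ : CnfForm V) : Finset V := Φ.biUnion fun c => c.image Prod.fst

/-- A Horn formula: every clause contains at most one positive literal. -/
def IsHorn (Φ : CnfForm V) : Prop := ∀ c ∈ Φ, (c.filter fun l => l.2 = true).card ≤ 1

/-- `Φ⁻` : the negative clauses of `Φ` (no positive literal). -/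
def negClauses (Φ : CnfForm V) : CnfForm V := Φ.filter fun c => ∀ l ∈ c, l.2 = false

/-- `Φ⁺` : the clauses of `Φ` with exactly one positive literal. -/
def posPart (Φ : CnfForm V) : CnfForm V :=
  Φ.filter fun c => (c.filter fun l => l.2 = true).card = 1

namespace Stmt2Aux

def plits (T : Finset V) : Finset (Lit V) := T.image fun v => (v, true)

lemma mem_plits {T : Finset V} {l : Lit V} : l ∈ plits T ↔ l.1 ∈ T ∧ l.2 = true := by
  obtain ⟨v, b⟩ := l
  simp [plits]

lemma mem_restrict {Φ : CnfForm V} {A : Finset (Lit V)} {c' : Clause V} :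
    c' ∈ restrict Φ A ↔
      ∃ c ∈ Φ, (∀ l ∈ A, l ∉ c) ∧ c' = c.filter fun l => (l.1, !l.2) ∉ A := by
  simp only [restrict, Finset.mem_image, Finset.mem_filter]
  constructor
  · rintro ⟨c, ⟨hc, hno⟩, rfl⟩; exact ⟨c, hc, hno, rfl⟩
  · rintro ⟨c, hc, hno, rfl⟩; exact ⟨c, ⟨hc, hno⟩, rfl⟩

def Rst (Φ : CnfForm V) (ρ : Finset V) (U : Finset V) : CnfForm V :=
  restrict (posPart Φ) (plits (ρ ∪ U))

lemma Rst_empty (Φ : CnfForm V) (ρ : Finset V) :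
    Rst Φ ρ ∅ = restrict (posPart Φ) (ρ.image fun v => (v, true)) := by
  simp [Rst, plits]

lemma filter_plits_eq {T : Finset V} (c : Clause V) :
    (c.filter fun l => (l.1, !l.2) ∉ plits T) = c.filter fun l => l.2 = true ∨ l.1 ∉ T := by
  apply Finset.filter_congr
  intro l _
  obtain ⟨v, b⟩ := l
  cases b <;> simp [mem_plits]

lemma mem_Rst {Φ : CnfForm V} {ρ U : Finset V} {c' : Clause V} :
    c' ∈ Rst Φ ρ U ↔
      ∃ c ∈ posPart Φ, (∀ v ∈ ρ ∪ U, ((v, true) : Lit V) ∉ c) ∧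
        c' = c.filter fun l => l.2 = true ∨ l.1 ∉ ρ ∪ U := by
  rw [Rst, mem_restrict]
  refine exists_congr fun c => and_congr_right fun _ => and_congr ?_ ?_
  · constructor
    · intro h v hv; exact h (v, true) (mem_plits.mpr ⟨hv, rfl⟩)
    · intro h l hl
      obtain ⟨h1, h2⟩ := mem_plits.mp hl
      obtain ⟨v, b⟩ := l
      cases h2
      exact h v h1
  · rw [filter_plits_eq]

lemma pos_lit_Rst {Φ : CnfForm V} {ρ U : Finset V} {c' : Clause V}
    (h : c' ∈ Rst Φ ρ U) : ∃ p ∈ c', p.2 = true := by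
  rw [mem_Rst] at h
  obtain ⟨c, hc, -, rfl⟩ := h
  have hcard : (c.filter fun l => l.2 = true).card = 1 := (Finset.mem_filter.mp hc).2
  obtain ⟨p, hp⟩ := Finset.card_eq_one.mp hcard
  have hpmem : p ∈ c.filter fun l => l.2 = true := hp ▸ Finset.mem_singleton_self p
  rw [Finset.mem_filter] at hpmem
  exact ⟨p, Finset.mem_filter.mpr ⟨hpmem.1, Or.inl hpmem.2⟩, hpmem.2⟩

lemma unit_Rst {Φ : CnfForm V} {ρ U : Finset V} {m : Lit V}
    (h : ({m} : Clause V) ∈ Rst Φ ρ U) : m.2 = true ∧ m.1 ∉ ρ ∪ U := by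
  have hpos : m.2 = true := by
    obtain ⟨p, hp, hp2⟩ := pos_lit_Rst h
    rw [Finset.mem_singleton] at hp
    rwa [hp] at hp2
  refine ⟨hpos, fun hmem => ?_⟩
  rw [mem_Rst] at h
  obtain ⟨c, hc, hno, heq⟩ := h
  have hmem' : m ∈ c.filter fun l => l.2 = true ∨ l.1 ∉ ρ ∪ U :=
    heq ▸ Finset.mem_singleton_self m
  have hmc : m ∈ c := (Finset.mem_filter.mp hmem').1
  apply hno m.1 hmem
  have : ((m.1, true) : Lit V) = m := Prod.ext rfl hpos.symm
  rwa [this]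

lemma restrict_insert {Φ : CnfForm V} {ρ U : Finset V} {y : V} :
    restrict (Rst Φ ρ U) {((y, true) : Lit V)} = Rst Φ ρ (insert y U) := by
  ext c''
  rw [mem_restrict]
  constructor
  · rintro ⟨c', hc', hy, rfl⟩
    rw [mem_Rst] at hc' ⊢
    obtain ⟨c, hc, hno, rfl⟩ := hc'
    have hy' : ((y, true) : Lit V) ∉ c := by
      intro hyc
      exact hy (y, true) (Finset.mem_singleton_self _)
        (Finset.mem_filter.mpr ⟨hyc, Or.inl rfl⟩)
    refine ⟨c, hc, ?_, ?_⟩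
    · intro v hv
      rw [Finset.union_comm ρ, Finset.insert_union, Finset.mem_insert] at hv
      rcases hv with rfl | hv
      · exact hy'
      · exact hno v (by rwa [Finset.union_comm])
    · rw [Finset.filter_filter]
      apply Finset.filter_congr
      intro l _
      obtain ⟨v, b⟩ := l
      cases b <;> simp [Prod.ext_iff, Finset.mem_union, Finset.mem_insert] <;> tauto
  · intro hc''
    rw [mem_Rst] at hc''
    obtain ⟨c, hc, hno, rfl⟩ := hc''
    have hnoU : ∀ v ∈ ρ ∪ U, ((v, true) : Lit V) ∉ c := by
      intro v hv
      apply hno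
      rw [Finset.union_comm ρ, Finset.insert_union]
      exact Finset.mem_insert_of_mem (by rwa [Finset.union_comm])
    have hyins : y ∈ ρ ∪ insert y U := by simp
    refine ⟨c.filter fun l => l.2 = true ∨ l.1 ∉ ρ ∪ U,
      mem_Rst.mpr ⟨c, hc, hnoU, rfl⟩, ?_, ?_⟩
    · intro l hl hlmem
      rw [Finset.mem_singleton] at hl
      subst hl
      exact hno y hyins (Finset.mem_filter.mp hlmem).1
    · rw [Finset.filter_filter]
      apply Finset.filter_congr
      intro l _
      obtain ⟨v, b⟩ := l
      cases b <;> simp [Prod.ext_iff, Finset.mem_union, Finset.mem_insert] <;> tauto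

lemma unit_mono {Φ : CnfForm V} {ρ U U' : Finset V} {y : V}
    (h : ({((y, true) : Lit V)} : Clause V) ∈ Rst Φ ρ U) (hUU : U ⊆ U')
    (hy : y ∉ ρ ∪ U') : ({((y, true) : Lit V)} : Clause V) ∈ Rst Φ ρ U' := by
  rw [mem_Rst] at h ⊢
  obtain ⟨c, hc, hno, heq⟩ := h
  have hsub : ρ ∪ U ⊆ ρ ∪ U' := Finset.union_subset_union_right hUU
  have hyc : ((y, true) : Lit V) ∈ c := by
    have : ((y, true) : Lit V) ∈ c.filter fun l => l.2 = true ∨ l.1 ∉ ρ ∪ U :=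
      heq ▸ Finset.mem_singleton_self _
    exact (Finset.mem_filter.mp this).1
  refine ⟨c, hc, ?_, ?_⟩
  · intro v hv hvc
    have hmem : ((v, true) : Lit V) ∈ c.filter fun l => l.2 = true ∨ l.1 ∉ ρ ∪ U :=
      Finset.mem_filter.mpr ⟨hvc, Or.inl rfl⟩
    rw [← heq, Finset.mem_singleton] at hmem
    injection hmem with h1 _
    subst h1
    exact hy hv
  · ext l
    simp only [Finset.mem_singleton, Finset.mem_filter]
    constructor
    · rintro rfl
      exact ⟨hyc, Or.inl rfl⟩
    · rintro ⟨hlc, hcond⟩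
      have hl : l ∈ c.filter fun l => l.2 = true ∨ l.1 ∉ ρ ∪ U := by
        rcases hcond with ht | hnot
        · exact Finset.mem_filter.mpr ⟨hlc, Or.inl ht⟩
        · exact Finset.mem_filter.mpr ⟨hlc, Or.inr fun hm => hnot (hsub hm)⟩
      rw [← heq, Finset.mem_singleton] at hl
      exact hl

lemma reach_shape {Φ : CnfForm V} {ρ : Finset V} {Ψ : CnfForm V}
    (h : UPReach (Rst Φ ρ ∅) Ψ) :
    ∀ A : Finset V, UPReach (Rst Φ ρ ∅) (Rst Φ ρ A) →
      ∃ B : Finset V, Ψ = Rst Φ ρ B ∧ UPReach (Rst Φ ρ ∅) (Rst Φ ρ (A ∪ B)) ∧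
        ∀ v ∈ B, ∃ Ψ' : CnfForm V, UPReach (Rst Φ ρ ∅) Ψ' ∧
          ({((v, true) : Lit V)} : Clause V) ∈ Ψ' := by
  induction h with
  | refl => exact fun A hA => ⟨∅, rfl, by rwa [Finset.union_empty], by simp⟩
  | step m hreach hm ih =>
    intro A hA
    obtain ⟨B', rfl, hAB', hBS⟩ := ih A hA
    obtain ⟨hm2, hm1⟩ := unit_Rst hm
    obtain ⟨y, b⟩ := m
    simp only at hm2
    subst hm2
    simp only [Finset.mem_union, not_or] at hm1
    refine ⟨insert y B', restrict_insert, ?_, ?_⟩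
    · rw [Finset.union_insert]
      by_cases hyA : y ∈ A ∪ B'
      · rwa [Finset.insert_eq_self.mpr hyA]
      · have hy' : y ∉ ρ ∪ (A ∪ B') := by
          simp only [Finset.mem_union, not_or] at hyA ⊢
          exact ⟨hm1.1, hyA⟩
        have hunit := unit_mono hm Finset.subset_union_right hy'
        have := UPReach.step _ hAB' hunit
        rwa [restrict_insert] at this
    · intro v hv
      rcases Finset.mem_insert.mp hv with rfl | hv
      · exact ⟨Rst Φ ρ B', hreach, hm⟩
      · exact hBS v hv

end Stmt2Aux

/-- Let `Φ` be Horn, `ρ ⊆ V_Φ` a set of variables assigned true, and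
`S ⊇ ρ` the set of variables set to true by unit propagation from `Φ⁺|_ρ` together
with `ρ`.  If no negative clause of `Φ` has all its variables in `S`, then the
complete interpretation assigning true exactly on `S` (false on `V_Φ \ S`) is a
model of `Φ`; in particular `Φ|_ρ` is satisfiable. -/


theorem stmt2 {V : Type} [DecidableEq V] (Φ : CnfForm V) (ρ : Finset V)
    (hHorn : IsHorn Φ) (hρ : ρ ⊆ varsOf Φ) (S : Set V)
    (hS : ∀ x : V, x ∈ S ↔ (x ∈ ρ ∨
      ∃ Ψ : CnfForm V, UPReach (restrict (posPart Φ) (ρ.image fun v => (v, true))) Ψ ∧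
        ({((x, true) : Lit V)} : Clause V) ∈ Ψ))
    (hno : ¬ ∃ c ∈ negClauses Φ, ∀ l ∈ c, l.1 ∈ S)
    (ν : V → Bool) (hνS : ∀ x ∈ S, ν x = true)
    (hνout : ∀ x ∈ varsOf Φ, x ∉ S → ν x = false) :
    (∀ c ∈ Φ, ∃ l ∈ c, ν l.1 = l.2) ∧
      ∃ μ : V → Bool, ∀ c ∈ restrict Φ (ρ.image fun v => (v, true)), ∃ l ∈ c, μ l.1 = l.2 := by
  classical
  simp only [← Stmt2Aux.Rst_empty Φ ρ] at hS
  -- key extension step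
  have key : ∀ A : Finset V, UPReach (Stmt2Aux.Rst Φ ρ ∅) (Stmt2Aux.Rst Φ ρ A) →
      (∀ v ∈ A, v ∈ S) → ∀ y ∈ S,
      ∃ C : Finset V, A ⊆ C ∧ UPReach (Stmt2Aux.Rst Φ ρ ∅) (Stmt2Aux.Rst Φ ρ C) ∧
        (∀ v ∈ C, v ∈ S) ∧ y ∈ ρ ∪ C := by
    intro A hA hAS y hy
    rcases (hS y).mp hy with hyρ | ⟨Ψ, hΨ, hyΨ⟩
    · exact ⟨A, Finset.Subset.refl A, hA, hAS, Finset.mem_union_left _ hyρ⟩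
    · obtain ⟨B, rfl, hAB, hBS⟩ := Stmt2Aux.reach_shape hΨ A hA
      obtain ⟨-, hy1⟩ := Stmt2Aux.unit_Rst hyΨ
      have hBS' : ∀ v ∈ B, v ∈ S := fun v hv => (hS v).mpr (Or.inr (hBS v hv))
      have hABS : ∀ v ∈ A ∪ B, v ∈ S := by
        intro v hv
        rcases Finset.mem_union.mp hv with h | h
        · exact hAS v h
        · exact hBS' v h
      by_cases hyA : y ∈ A
      · exact ⟨A ∪ B, Finset.subset_union_left, hAB, hABS,
          Finset.mem_union_right _ (Finset.mem_union_left _ hyA)⟩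
      · have hy' : y ∉ ρ ∪ (A ∪ B) := by
          simp only [Finset.mem_union, not_or] at hy1 ⊢
          exact ⟨hy1.1, hyA, hy1.2⟩
        have hunit := Stmt2Aux.unit_mono hyΨ Finset.subset_union_right hy'
        have hreach := UPReach.step _ hAB hunit
        rw [Stmt2Aux.restrict_insert] at hreach
        refine ⟨insert y (A ∪ B), ?_, hreach, ?_, ?_⟩
        · exact Finset.Subset.trans Finset.subset_union_left (Finset.subset_insert _ _)
        · intro v hv
          rcases Finset.mem_insert.mp hv with rfl | hv
          · exact hy
          · exact hABS v hv
        · exact Finset.mem_union_right _ (Finset.mem_insert_self _ _)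
  -- accumulate over a finset of variables in S
  have accum : ∀ N : Finset V, (∀ v ∈ N, v ∈ S) →
      ∃ C : Finset V, UPReach (Stmt2Aux.Rst Φ ρ ∅) (Stmt2Aux.Rst Φ ρ C) ∧
        (∀ v ∈ C, v ∈ S) ∧ ∀ y ∈ N, y ∈ ρ ∪ C := by
    intro N
    induction N using Finset.induction_on with
    | empty => exact fun _ => ⟨∅, UPReach.refl _, by simp, by simp⟩
    | @insert a N ha ih =>
      intro hNS
      obtain ⟨C, hC, hCS, hNC⟩ := ih fun v hv => hNS v (Finset.mem_insert_of_mem hv)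
      obtain ⟨C', hCC', hC', hCS', haC'⟩ :=
        key C hC hCS a (hNS a (Finset.mem_insert_self _ _))
      refine ⟨C', hC', hCS', ?_⟩
      intro y hy
      rcases Finset.mem_insert.mp hy with rfl | hy
      · exact haC'
      · exact Finset.union_subset_union_right hCC' (hNC y hy)
  -- main closure property
  have main : ∀ c ∈ Φ, (∀ l ∈ c, l.2 = false → l.1 ∈ S) →
      ∀ x : V, ((x, true) : Lit V) ∈ c → x ∈ S := by
    intro c hcΦ hneg x hx
    have hcard : (c.filter fun l => l.2 = true).card = 1 := by
      have h1 := hHorn c hcΦ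
      have h2 : 0 < (c.filter fun l => l.2 = true).card :=
        Finset.card_pos.mpr ⟨(x, true), Finset.mem_filter.mpr ⟨hx, rfl⟩⟩
      omega
    have hcpos : c ∈ posPart Φ := Finset.mem_filter.mpr ⟨hcΦ, hcard⟩
    have hfilt : (c.filter fun l => l.2 = true) = {((x, true) : Lit V)} := by
      obtain ⟨p, hp⟩ := Finset.card_eq_one.mp hcard
      have hx' : ((x, true) : Lit V) ∈ ({p} : Finset (Lit V)) :=
        hp ▸ Finset.mem_filter.mpr ⟨hx, rfl⟩
      rw [Finset.mem_singleton] at hx'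
      rw [hp, hx']
    obtain ⟨C, hC, hCS, hNC⟩ := accum ((c.filter fun l => l.2 = false).image Prod.fst)
      (by
        intro v hv
        simp only [Finset.mem_image, Finset.mem_filter] at hv
        obtain ⟨l, ⟨hl, hl2⟩, rfl⟩ := hv
        exact hneg l hl hl2)
    by_cases hxC : x ∈ ρ ∪ C
    · rcases Finset.mem_union.mp hxC with h | h
      · exact (hS x).mpr (Or.inl h)
      · exact hCS x h
    · refine (hS x).mpr (Or.inr ⟨Stmt2Aux.Rst Φ ρ C, hC, ?_⟩)
      rw [Stmt2Aux.mem_Rst]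
      refine ⟨c, hcpos, ?_, ?_⟩
      · intro v hv hvc
        have hmem : ((v, true) : Lit V) ∈ c.filter fun l => l.2 = true :=
          Finset.mem_filter.mpr ⟨hvc, rfl⟩
        rw [hfilt, Finset.mem_singleton] at hmem
        injection hmem with h1 _
        subst h1
        exact hxC hv
      · ext l
        simp only [Finset.mem_singleton, Finset.mem_filter]
        constructor
        · rintro rfl
          exact ⟨hx, Or.inl rfl⟩
        · rintro ⟨hlc, hcond⟩
          cases hl2 : l.2 with
          | true =>
            have : l ∈ c.filter fun l => l.2 = true := Finset.mem_filter.mpr ⟨hlc, hl2⟩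
            rw [hfilt, Finset.mem_singleton] at this
            exact this
          | false =>
            exfalso
            rcases hcond with ht | hnotin
            · rw [hl2] at ht; exact Bool.false_ne_true ht
            · apply hnotin
              exact hNC l.1 (Finset.mem_image.mpr ⟨l, Finset.mem_filter.mpr ⟨hlc, hl2⟩, rfl⟩)
  -- part 1 : ν is a model of Φ
  have part1 : ∀ c ∈ Φ, ∃ l ∈ c, ν l.1 = l.2 := by
    intro c hc
    by_cases hex : ∃ l ∈ c, l.2 = false ∧ l.1 ∉ S
    · obtain ⟨l, hl, hl2, hlS⟩ := hex
      refine ⟨l, hl, ?_⟩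
      rw [hνout l.1 (Finset.mem_biUnion.mpr ⟨c, hc, Finset.mem_image.mpr ⟨l, hl, rfl⟩⟩) hlS, hl2]
    · push_neg at hex
      have hex' : ∀ l ∈ c, l.2 = false → l.1 ∈ S := hex
      by_cases hpos : ∃ l ∈ c, l.2 = true
      · obtain ⟨l, hl, hl2⟩ := hpos
        have hlx : ((l.1, true) : Lit V) ∈ c := by
          have : ((l.1, true) : Lit V) = l := Prod.ext rfl hl2.symm
          rwa [this]
        have hxS : l.1 ∈ S := main c hc hex' l.1 hlx
        exact ⟨l, hl, by rw [hνS l.1 hxS, hl2]⟩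
      · exfalso
        apply hno
        push_neg at hpos
        simp only [Bool.not_eq_true] at hpos
        exact ⟨c, Finset.mem_filter.mpr ⟨hc, hpos⟩, fun l hl => hex' l hl (hpos l hl)⟩
  refine ⟨part1, ν, ?_⟩
  intro c' hc'
  rw [Stmt2Aux.mem_restrict] at hc'
  obtain ⟨c, hc, hnoρ, rfl⟩ := hc'
  obtain ⟨l, hl, hνl⟩ := part1 c hc
  refine ⟨l, Finset.mem_filter.mpr ⟨hl, ?_⟩, hνl⟩
  intro hmem
  simp only [Finset.mem_image] at hmem
  obtain ⟨v, hv, heq⟩ := hmem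
  have h1 : v = l.1 := congrArg Prod.fst heq
  have h2 : (true : Bool) = !l.2 := congrArg Prod.snd heq
  have hl2 : l.2 = false := by
    cases h : l.2
    · rfl
    · rw [h] at h2; exact absurd h2.symm (by simp)
  have hνtrue : ν l.1 = true := hνS l.1 ((hS l.1).mpr (Or.inl (h1 ▸ hv)))
  rw [hνl, hl2] at hνtrue
  exact Bool.false_ne_true hνtrue
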